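/- The series ∑_{p ∈ ℕ*} p^{−2ε} · ( ∑_{n ∈ ℕ*, n ≠ p} 1/|λ_n − λ_p| )² converges for every ε > 0, where λ_n = −i·(n(g + n²)·tanh(hn))^{1/2}. -/

import Mathlib

open Real Finset

lemma my_tanh_pos {x : ℝ} (hx : 0 < x) : 0 < Real.tanh x := by
  rw [Real.tanh_eq_sinh_div_cosh]
  exact div_pos (Real.sinh_pos_iff.2 hx) (Real.cosh_pos x)

lemma my_tanh_mono {x y : ℝ} (hxy : x ≤ y) : Real.tanh x ≤ Real.tanh y := by
  rw [Real.tanh_eq_sinh_div_cosh, Real.tanh_eq_sinh_div_cosh,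
    div_le_div_iff₀ (Real.cosh_pos x) (Real.cosh_pos y)]
  have h1 := Real.sinh_sub x y
  have h2 : Real.sinh (x - y) ≤ 0 := Real.sinh_nonpos_iff.2 (by linarith)
  linarith

lemma my_tanh_le_one (x : ℝ) : Real.tanh x ≤ 1 := by
  rw [Real.tanh_eq_sinh_div_cosh, div_le_one (Real.cosh_pos x)]
  nlinarith [Real.sinh_sub_cosh x, Real.exp_pos (-x)]

/-- telescoping tail term: `1/((m+1)√(m+1)) ≤ 2/√m - 2/√(m+1)` for `m ≥ 1`. -/
lemma my_tail_term {m : ℕ} (hm : 1 ≤ m) :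
    1 / (((m : ℝ) + 1) * Real.sqrt ((m : ℝ) + 1)) ≤
      2 / Real.sqrt m - 2 / Real.sqrt ((m : ℝ) + 1) := by
  set a := Real.sqrt m with ha'
  set b := Real.sqrt ((m : ℝ) + 1) with hb'
  have hm1 : (1 : ℝ) ≤ (m : ℝ) := by exact_mod_cast hm
  have ha : 0 < a := Real.sqrt_pos.2 (by linarith)
  have hb : 0 < b := Real.sqrt_pos.2 (by linarith)
  have hab : a ≤ b := Real.sqrt_le_sqrt (by linarith)
  have ha2 : a ^ 2 = (m : ℝ) := Real.sq_sqrt (by linarith)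
  have hb2 : b ^ 2 = (m : ℝ) + 1 := Real.sq_sqrt (by linarith)
  have h1 : (b - a) * (b + a) = 1 := by nlinarith
  rw [div_sub_div _ _ ha.ne' hb.ne', ← hb2,
    div_le_div_iff₀ (by positivity) (by positivity)]
  nlinarith [mul_pos ha hb, mul_pos (mul_pos ha hb) hb,
    mul_le_mul_of_nonneg_right hab (le_of_lt hb),
    mul_le_mul_of_nonneg_right (mul_le_mul_of_nonneg_right hab hb.le) hb.le]

lemma my_harmonic_bound (p : ℕ) :
    ∑ j ∈ Finset.range p, ((j : ℝ) + 1)⁻¹ ≤ 1 + Real.log p := by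
  have h := harmonic_le_one_add_log p
  have he : ((harmonic p : ℚ) : ℝ) = ∑ j ∈ Finset.range p, ((j : ℝ) + 1)⁻¹ := by
    rw [harmonic]
    push_cast
    rfl
  linarith [he ▸ h]

lemma my_F_le (g h : ℝ) (hg : 0 < g) (hh : 0 < h) (m : ℕ) :
    Real.sqrt ((m : ℝ) * (g + (m : ℝ) ^ 2) * Real.tanh (h * m)) ≤
      Real.sqrt (g + 1) * ((m : ℝ) * Real.sqrt m) := by
  rcases Nat.eq_zero_or_pos m with hm | hm
  · subst hm; simp
  have hm1 : (1 : ℝ) ≤ (m : ℝ) := by exact_mod_cast hm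
  have harg : (m : ℝ) * (g + (m : ℝ) ^ 2) * Real.tanh (h * m) ≤ (g + 1) * ((m : ℝ) ^ 2 * m) := by
    have ht1 : Real.tanh (h * m) ≤ 1 := my_tanh_le_one _
    have ht0 : 0 < Real.tanh (h * m) := my_tanh_pos (by positivity)
    have h0 : (m : ℝ) * (g + (m : ℝ) ^ 2) * Real.tanh (h * m) ≤ (m : ℝ) * (g + (m : ℝ) ^ 2) := by
      nlinarith [mul_le_mul_of_nonneg_left ht1 (by positivity : (0:ℝ) ≤ (m : ℝ) * (g + (m : ℝ) ^ 2))]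
    nlinarith [mul_nonneg (mul_nonneg hg.le (by linarith : (0:ℝ) ≤ (m:ℝ)))
      (by nlinarith : (0:ℝ) ≤ (m:ℝ)^2 - 1)]
  calc Real.sqrt ((m : ℝ) * (g + (m : ℝ) ^ 2) * Real.tanh (h * m))
      ≤ Real.sqrt ((g + 1) * ((m : ℝ) ^ 2 * m)) := Real.sqrt_le_sqrt harg
    _ = Real.sqrt (g + 1) * ((m : ℝ) * Real.sqrt m) := by
        rw [Real.sqrt_mul (by linarith), Real.sqrt_mul (by positivity),
          Real.sqrt_sq (by positivity)]

lemma my_gap (g h : ℝ) (hg : 0 < g) (hh : 0 < h) {p n : ℕ} (hp : 1 ≤ p) (hpn : p < n) :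
    Real.tanh h / (2 * Real.sqrt (g + 1)) * ((n : ℝ) - p) * Real.sqrt n ≤
      Real.sqrt ((n : ℝ) * (g + (n : ℝ) ^ 2) * Real.tanh (h * n)) -
        Real.sqrt ((p : ℝ) * (g + (p : ℝ) ^ 2) * Real.tanh (h * p)) := by
  set Fn := Real.sqrt ((n : ℝ) * (g + (n : ℝ) ^ 2) * Real.tanh (h * n)) with hFn'
  set Fp := Real.sqrt ((p : ℝ) * (g + (p : ℝ) ^ 2) * Real.tanh (h * p)) with hFp'
  have hp1 : (1 : ℝ) ≤ (p : ℝ) := by exact_mod_cast hp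
  have hpnR : (p : ℝ) < (n : ℝ) := by exact_mod_cast hpn
  have hn1 : (1 : ℝ) ≤ (n : ℝ) := by linarith
  have htp : 0 < Real.tanh (h * p) := my_tanh_pos (by positivity)
  have htn : 0 < Real.tanh (h * n) := my_tanh_pos (by positivity)
  have hth : 0 < Real.tanh h := my_tanh_pos hh
  have hthp : Real.tanh h ≤ Real.tanh (h * p) := my_tanh_mono (by nlinarith)
  have htpn : Real.tanh (h * p) ≤ Real.tanh (h * n) := my_tanh_mono (by nlinarith)
  have hFn2 : Fn ^ 2 = (n : ℝ) * (g + (n : ℝ) ^ 2) * Real.tanh (h * n) :=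
    Real.sq_sqrt (by positivity)
  have hFp2 : Fp ^ 2 = (p : ℝ) * (g + (p : ℝ) ^ 2) * Real.tanh (h * p) :=
    Real.sq_sqrt (by positivity)
  have hFn0 : 0 < Fn := Real.sqrt_pos.2 (by positivity)
  have hFp0 : 0 ≤ Fp := Real.sqrt_nonneg _
  -- lower bound for the difference of squares
  have hsq : Real.tanh h * (((n : ℝ) - p) * (n : ℝ) ^ 2) ≤ Fn ^ 2 - Fp ^ 2 := by
    have hA : (n : ℝ) * (g + (n : ℝ) ^ 2) * Real.tanh (h * p) ≤
        (n : ℝ) * (g + (n : ℝ) ^ 2) * Real.tanh (h * n) :=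
      mul_le_mul_of_nonneg_left htpn (by positivity)
    have hB : Real.tanh h * (((n : ℝ) - p) * (n : ℝ) ^ 2) ≤
        Real.tanh (h * p) * ((n : ℝ) * (g + (n : ℝ) ^ 2) - (p : ℝ) * (g + (p : ℝ) ^ 2)) := by
      apply mul_le_mul hthp ?_ ?_ htp.le
      · nlinarith [mul_nonneg (mul_nonneg (by linarith : (0:ℝ) ≤ (p : ℝ))
          (by linarith : (0:ℝ) ≤ (n : ℝ) - p)) (by positivity : (0:ℝ) ≤ (n : ℝ) + p)]
      · nlinarith
    rw [hFn2, hFp2]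
    nlinarith
  -- upper bound for the sum
  have hsum : Fn + Fp ≤ 2 * Real.sqrt (g + 1) * ((n : ℝ) * Real.sqrt n) := by
    have h1 := my_F_le g h hg hh n
    have h2 := my_F_le g h hg hh p
    have h3 : Real.sqrt (g + 1) * ((p : ℝ) * Real.sqrt p) ≤
        Real.sqrt (g + 1) * ((n : ℝ) * Real.sqrt n) := by
      apply mul_le_mul_of_nonneg_left ?_ (Real.sqrt_nonneg _)
      apply mul_le_mul (by linarith) (Real.sqrt_le_sqrt (by linarith))
        (Real.sqrt_nonneg _) (by linarith)
    rw [← hFn', ← hFp'] at *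
    linarith
  have hS : 0 < Fn + Fp := by linarith
  have hg1 : 0 < Real.sqrt (g + 1) := Real.sqrt_pos.2 (by linarith)
  have hc2 : Real.tanh h / (2 * Real.sqrt (g + 1)) * (2 * Real.sqrt (g + 1)) = Real.tanh h :=
    div_mul_cancel₀ _ (by positivity)
  have hsn : Real.sqrt n * Real.sqrt n = (n : ℝ) := Real.mul_self_sqrt (by linarith)
  have key : Real.tanh h / (2 * Real.sqrt (g + 1)) * ((n : ℝ) - p) * Real.sqrt n * (Fn + Fp) ≤
      (Fn - Fp) * (Fn + Fp) := by
    have hcoef : 0 ≤ Real.tanh h / (2 * Real.sqrt (g + 1)) * ((n : ℝ) - p) * Real.sqrt n := by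
      apply mul_nonneg (mul_nonneg (by positivity) (by linarith)) (Real.sqrt_nonneg _)
    calc Real.tanh h / (2 * Real.sqrt (g + 1)) * ((n : ℝ) - p) * Real.sqrt n * (Fn + Fp)
        ≤ Real.tanh h / (2 * Real.sqrt (g + 1)) * ((n : ℝ) - p) * Real.sqrt n *
            (2 * Real.sqrt (g + 1) * ((n : ℝ) * Real.sqrt n)) :=
          mul_le_mul_of_nonneg_left hsum hcoef
      _ = Real.tanh h / (2 * Real.sqrt (g + 1)) * (2 * Real.sqrt (g + 1)) *
            (((n : ℝ) - p) * ((Real.sqrt n * Real.sqrt n) * (n : ℝ))) := by ring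
      _ = Real.tanh h * (((n : ℝ) - p) * (n : ℝ) ^ 2) := by rw [hc2, hsn]; ring
      _ ≤ Fn ^ 2 - Fp ^ 2 := hsq
      _ = (Fn - Fp) * (Fn + Fp) := by ring
  exact le_of_mul_le_mul_right key hS

lemma my_inner (c : ℝ) (hc : 0 < c) (p : ℕ) (hp : 1 ≤ p) (F : ℕ → ℝ)
    (hgap : ∀ a b : ℕ, 1 ≤ a → a < b → c * ((b : ℝ) - a) * Real.sqrt b ≤ F b - F a)
    (f : ℕ → ℝ)
    (hf : ∀ n, f n = if n = 0 ∨ n = p then 0 else 1 / |F n - F p|) :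
    Summable f ∧ ∑' n, f n ≤ 6 / c * (1 + Real.log p) / Real.sqrt p := by
  have hp1 : (1 : ℝ) ≤ (p : ℝ) := by exact_mod_cast hp
  set sp := Real.sqrt p with hsp'
  have hsp : 0 < sp := Real.sqrt_pos.2 (by linarith)
  set e1 : ℕ → ℝ := fun n => if n < p then 1 / (c * ((p : ℝ) - n) * sp) else 0 with he1
  set e2 : ℕ → ℝ := fun n => if p < n ∧ n ≤ 2 * p then 1 / (c * ((n : ℝ) - p) * sp) else 0
    with he2
  set g2 : ℕ → ℝ := fun n => if n ≤ 2 * p then 0 else 2 / (c * ((n : ℝ) * Real.sqrt n))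
    with hg2
  have he1nn : ∀ n, 0 ≤ e1 n := by
    intro n; simp only [he1]
    split_ifs with hn
    · have hn' : (n : ℝ) < p := by exact_mod_cast hn
      have hd : 0 < c * ((p : ℝ) - n) * sp := mul_pos (mul_pos hc (by linarith)) hsp
      exact le_of_lt (div_pos one_pos hd)
    · exact le_refl 0
  have he2nn : ∀ n, 0 ≤ e2 n := by
    intro n; simp only [he2]
    split_ifs with hn
    · have hn' : (p : ℝ) < n := by exact_mod_cast hn.1
      have hd : 0 < c * ((n : ℝ) - p) * sp := mul_pos (mul_pos hc (by linarith)) hsp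
      exact le_of_lt (div_pos one_pos hd)
    · exact le_refl 0
  have hg2nn : ∀ n, 0 ≤ g2 n := by
    intro n; simp only [hg2]
    split_ifs with hn
    · exact le_refl 0
    · have : (0 : ℝ) < n := by
        have : 1 ≤ n := by omega
        exact_mod_cast Nat.lt_of_lt_of_le Nat.zero_lt_one this
      positivity
  have hfnn : ∀ n, 0 ≤ f n := by
    intro n; rw [hf]
    split_ifs with hn
    · exact le_refl 0
    · positivity
  -- pointwise domination
  have hle : ∀ n, f n ≤ e1 n + e2 n + g2 n := by
    intro n
    rw [hf]
    split_ifs with hcase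
    · have := he1nn n; have := he2nn n; have := hg2nn n; linarith
    · push_neg at hcase
      obtain ⟨hn0, hnp⟩ := hcase
      have hn1 : 1 ≤ n := Nat.one_le_iff_ne_zero.2 hn0
      rcases lt_or_gt_of_ne hnp with hlt | hgt
      · -- n < p
        have hg := hgap n p hn1 hlt
        have hnR : (n : ℝ) < p := by exact_mod_cast hlt
        have hlow : c * ((p : ℝ) - n) * sp ≤ F p - F n := by
          calc c * ((p : ℝ) - n) * sp = c * ((p : ℝ) - n) * Real.sqrt p := rfl
            _ ≤ F p - F n := hgap n p hn1 hlt
        have hpos : 0 < c * ((p : ℝ) - n) * sp := mul_pos (mul_pos hc (by linarith)) hsp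
        have habs : |F n - F p| = F p - F n := by
          rw [abs_sub_comm, abs_of_pos (by linarith)]
        rw [habs]
        have h1 : 1 / (F p - F n) ≤ 1 / (c * ((p : ℝ) - n) * sp) :=
          one_div_le_one_div_of_le hpos hlow
        have h2 : e1 n = 1 / (c * ((p : ℝ) - n) * sp) := by
          simp only [he1]; rw [if_pos hlt]
        have h3 : e2 n = 0 := by simp only [he2]; rw [if_neg (by omega)]
        have h4 : g2 n = 0 := by simp only [hg2]; rw [if_pos (by omega)]
        rw [h2, h3, h4]; linarith
      · -- p < n
        have hg := hgap p n hp hgt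
        have hnR : (p : ℝ) < n := by exact_mod_cast hgt
        have hsn : 0 < Real.sqrt n := Real.sqrt_pos.2 (by linarith)
        have habs : |F n - F p| = F n - F p := by
          apply abs_of_pos
          have hpos : 0 < c * ((n : ℝ) - p) * Real.sqrt n :=
            mul_pos (mul_pos hc (by linarith)) hsn
          linarith
        rw [habs]
        by_cases h2p : n ≤ 2 * p
        · have hspn : sp ≤ Real.sqrt n := Real.sqrt_le_sqrt (by exact_mod_cast hgt.le)
          have hlow : c * ((n : ℝ) - p) * sp ≤ F n - F p := by
            calc c * ((n : ℝ) - p) * sp ≤ c * ((n : ℝ) - p) * Real.sqrt n := by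
                  apply mul_le_mul_of_nonneg_left hspn
                  apply mul_nonneg hc.le (by linarith)
              _ ≤ F n - F p := hg
          have hpos : 0 < c * ((n : ℝ) - p) * sp := mul_pos (mul_pos hc (by linarith)) hsp
          have h1 : 1 / (F n - F p) ≤ 1 / (c * ((n : ℝ) - p) * sp) :=
            one_div_le_one_div_of_le hpos hlow
          have h2 : e2 n = 1 / (c * ((n : ℝ) - p) * sp) := by
            simp only [he2]; rw [if_pos ⟨hgt, h2p⟩]
          have h3 : e1 n = 0 := by simp only [he1]; rw [if_neg (by omega)]
          have h4 : g2 n = 0 := by simp only [hg2]; rw [if_pos h2p]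
          rw [h2, h3, h4]; linarith
        · push_neg at h2p
          have hhalf : (n : ℝ) / 2 ≤ (n : ℝ) - p := by
            have : 2 * p + 1 ≤ n := by omega
            have : (2 * (p : ℝ)) + 1 ≤ n := by exact_mod_cast this
            linarith
          have hlow : c * ((n : ℝ) * Real.sqrt n) / 2 ≤ F n - F p := by
            calc c * ((n : ℝ) * Real.sqrt n) / 2 = c * ((n : ℝ) / 2) * Real.sqrt n := by ring
              _ ≤ c * ((n : ℝ) - p) * Real.sqrt n := by
                  apply mul_le_mul_of_nonneg_right ?_ hsn.le
                  exact mul_le_mul_of_nonneg_left hhalf hc.le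
              _ ≤ F n - F p := hg
          have hnpos : (0 : ℝ) < n := by linarith
          have hpos : 0 < c * ((n : ℝ) * Real.sqrt n) / 2 := by positivity
          have h1 : 1 / (F n - F p) ≤ 1 / (c * ((n : ℝ) * Real.sqrt n) / 2) :=
            one_div_le_one_div_of_le hpos hlow
          have h2 : g2 n = 2 / (c * ((n : ℝ) * Real.sqrt n)) := by
            simp only [hg2]; rw [if_neg (by omega)]
          have heq : 1 / (c * ((n : ℝ) * Real.sqrt n) / 2) = 2 / (c * ((n : ℝ) * Real.sqrt n)) := by
            rw [one_div_div]
          have h3 : e1 n = 0 := by simp only [he1]; rw [if_neg (by omega)]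
          have h4 : e2 n = 0 := by simp only [he2]; rw [if_neg (by omega)]
          rw [h2, h3, h4]; rw [heq] at h1; linarith
  -- sums of e1 and e2
  have hsum1 : ∀ (q : ℕ), ∑ j ∈ range q, 1 / (c * ((j : ℝ) + 1) * sp) ≤
      (1 / (c * sp)) * (1 + Real.log q) := by
    intro q
    have : ∑ j ∈ range q, 1 / (c * ((j : ℝ) + 1) * sp) =
        (1 / (c * sp)) * ∑ j ∈ range q, ((j : ℝ) + 1)⁻¹ := by
      rw [Finset.mul_sum]
      apply Finset.sum_congr rfl
      intro j _
      field_simp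
    rw [this]
    apply mul_le_mul_of_nonneg_left (my_harmonic_bound q) (by positivity)
  have se1 : Summable e1 := by
    apply summable_of_ne_finset_zero (s := Finset.range p)
    intro n hn
    simp only [he1]
    rw [if_neg (by simpa using hn)]
  have te1 : ∑' n, e1 n ≤ (1 / (c * sp)) * (1 + Real.log p) := by
    rw [tsum_eq_sum (s := Finset.range p)
      (fun n hn => by simp only [he1]; rw [if_neg (by simpa using hn)])]
    have hrefl : ∑ j ∈ range p, e1 j = ∑ j ∈ range p, 1 / (c * ((j : ℝ) + 1) * sp) := by
      rw [← Finset.sum_range_reflect]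
      apply Finset.sum_congr rfl
      intro j hj
      rw [Finset.mem_range] at hj
      simp only [he1]
      rw [if_pos (by omega)]
      have hc1 : ((p - 1 - j : ℕ) : ℝ) = (p : ℝ) - ((j : ℝ) + 1) := by
        have h1 : p - 1 - j + (j + 1) = p := by omega
        have h2 := congrArg (fun k : ℕ => (k : ℝ)) h1
        push_cast at h2
        linarith
      rw [hc1]
      ring_nf
    rw [hrefl]
    exact hsum1 p
  have se2 : Summable e2 := by
    apply summable_of_ne_finset_zero (s := Finset.range (2 * p + 1))
    intro n hn
    rw [Finset.mem_range, not_lt] at hn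
    simp only [he2]
    rw [if_neg (by omega)]
  have te2 : ∑' n, e2 n ≤ (1 / (c * sp)) * (1 + Real.log p) := by
    rw [tsum_eq_sum (s := Finset.range (2 * p + 1)) (fun n hn => by
      rw [Finset.mem_range, not_lt] at hn
      simp only [he2]; rw [if_neg (by omega)])]
    have hsplit : (2 * p + 1) = (p + 1) + p := by omega
    rw [hsplit, Finset.sum_range_add]
    have hz : ∑ i ∈ range (p + 1), e2 i = 0 := by
      apply Finset.sum_eq_zero
      intro i hi
      rw [Finset.mem_range] at hi
      simp only [he2]
      rw [if_neg (by omega)]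
    rw [hz, zero_add]
    have hre : ∑ k ∈ range p, e2 (p + 1 + k) =
        ∑ k ∈ range p, 1 / (c * ((k : ℝ) + 1) * sp) := by
      apply Finset.sum_congr rfl
      intro k hk
      rw [Finset.mem_range] at hk
      simp only [he2]
      rw [if_pos (by omega)]
      have hc1 : ((p + 1 + k : ℕ) : ℝ) - (p : ℝ) = (k : ℝ) + 1 := by push_cast; ring
      rw [hc1]
    rw [hre]
    exact hsum1 p
  -- g2 : tail estimate
  have hps : ∀ N, ∑ n ∈ range N, g2 n ≤ 4 / (c * sp) := by
    intro N
    set W : ℕ → ℝ := fun k => (2 / c) * (2 / Real.sqrt ((2 * p + k : ℕ) : ℝ)) with hW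
    have hWnn : ∀ k, 0 ≤ W k := by
      intro k; simp only [hW]; positivity
    have h1 : ∑ n ∈ range N, g2 n ≤ ∑ n ∈ range (2 * p + 1 + N), g2 n := by
      apply Finset.sum_le_sum_of_subset_of_nonneg
      · exact Finset.range_subset_range.2 (by omega)
      · intro i _ _; exact hg2nn i
    have h2 : ∑ n ∈ range (2 * p + 1 + N), g2 n = ∑ k ∈ range N, g2 (2 * p + 1 + k) := by
      rw [Finset.sum_range_add]
      have hz : ∑ i ∈ range (2 * p + 1), g2 i = 0 := by
        apply Finset.sum_eq_zero
        intro i hi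
        rw [Finset.mem_range] at hi
        simp only [hg2]
        rw [if_pos (by omega)]
      rw [hz, zero_add]
    have h3 : ∀ k, g2 (2 * p + 1 + k) ≤ W k - W (k + 1) := by
      intro k
      have hm : 1 ≤ 2 * p + k := by omega
      have htt := my_tail_term hm
      have hcast : ((2 * p + k : ℕ) : ℝ) + 1 = ((2 * p + 1 + k : ℕ) : ℝ) := by push_cast; ring
      have hcast2 : ((2 * p + (k + 1) : ℕ) : ℝ) = ((2 * p + k : ℕ) : ℝ) + 1 := by
        push_cast; ring
      simp only [hg2]
      rw [if_neg (by omega)]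
      simp only [hW, hcast2]
      rw [← hcast]
      have : 2 / (c * ((((2 * p + k : ℕ) : ℝ) + 1) * Real.sqrt (((2 * p + k : ℕ) : ℝ) + 1))) =
          (2 / c) * (1 / ((((2 * p + k : ℕ) : ℝ) + 1) * Real.sqrt (((2 * p + k : ℕ) : ℝ) + 1))) := by
        field_simp
      rw [this]
      have h4 : (2 / c) * (1 / ((((2 * p + k : ℕ) : ℝ) + 1) * Real.sqrt (((2 * p + k : ℕ) : ℝ) + 1)))
          ≤ (2 / c) * (2 / Real.sqrt ((2 * p + k : ℕ) : ℝ) - 2 / Real.sqrt (((2 * p + k : ℕ) : ℝ) + 1)) :=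
        mul_le_mul_of_nonneg_left htt (by positivity)
      calc (2 / c) * (1 / ((((2 * p + k : ℕ) : ℝ) + 1) * Real.sqrt (((2 * p + k : ℕ) : ℝ) + 1)))
          ≤ (2 / c) * (2 / Real.sqrt ((2 * p + k : ℕ) : ℝ) - 2 / Real.sqrt (((2 * p + k : ℕ) : ℝ) + 1)) := h4
        _ = (2 / c) * (2 / Real.sqrt ((2 * p + k : ℕ) : ℝ)) -
              (2 / c) * (2 / Real.sqrt (((2 * p + k : ℕ) : ℝ) + 1)) := by ring
    have h5 : ∑ k ∈ range N, g2 (2 * p + 1 + k) ≤ ∑ k ∈ range N, (W k - W (k + 1)) :=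
      Finset.sum_le_sum fun k _ => h3 k
    have h6 : ∑ k ∈ range N, (W k - W (k + 1)) = W 0 - W N := Finset.sum_range_sub' W N
    have h7 : W 0 ≤ 4 / (c * sp) := by
      simp only [hW]
      have hsple : sp ≤ Real.sqrt ((2 * p + 0 : ℕ) : ℝ) := by
        apply Real.sqrt_le_sqrt
        push_cast
        linarith
      have hpos : 0 < Real.sqrt ((2 * p + 0 : ℕ) : ℝ) := lt_of_lt_of_le hsp hsple
      rw [div_mul_div_comm, div_le_div_iff₀ (by positivity) (by positivity)]
      calc 2 * 2 * (c * sp) = 4 * (c * sp) := by ring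
        _ ≤ 4 * (c * Real.sqrt ((2 * p + 0 : ℕ) : ℝ)) := by
            apply mul_le_mul_of_nonneg_left (mul_le_mul_of_nonneg_left hsple hc.le) (by norm_num)
        _ = 4 * (c * Real.sqrt ((2 * p + 0 : ℕ) : ℝ)) := rfl
    calc ∑ n ∈ range N, g2 n ≤ ∑ k ∈ range N, g2 (2 * p + 1 + k) := h2 ▸ h1
      _ ≤ W 0 - W N := h6 ▸ h5
      _ ≤ W 0 := by linarith [hWnn N]
      _ ≤ 4 / (c * sp) := h7
  have sg2 : Summable g2 := summable_of_sum_range_le hg2nn hps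
  have tg2 : ∑' n, g2 n ≤ 4 / (c * sp) := Real.tsum_le_of_sum_range_le hg2nn hps
  -- combine
  have hgsum : Summable (fun n => e1 n + e2 n + g2 n) := (se1.add se2).add sg2
  have hfs : Summable f := Summable.of_nonneg_of_le hfnn hle hgsum
  constructor
  · exact hfs
  · have h1 : ∑' n, f n ≤ ∑' n, (e1 n + e2 n + g2 n) := Summable.tsum_le_tsum hle hfs hgsum
    have h2 : ∑' n, (e1 n + e2 n + g2 n) = (∑' n, e1 n) + (∑' n, e2 n) + (∑' n, g2 n) := by
      rw [Summable.tsum_add (se1.add se2) sg2, Summable.tsum_add se1 se2]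
    have hL : 0 ≤ Real.log p := Real.log_nonneg hp1
    have ht : (0 : ℝ) < 1 / (c * sp) := by positivity
    have h3 : (1 / (c * sp)) * (1 + Real.log p) + (1 / (c * sp)) * (1 + Real.log p)
        + 4 / (c * sp) ≤ 6 / c * (1 + Real.log p) / sp := by
      have hq1 : 6 / c * (1 + Real.log p) / sp = 6 * (1 + Real.log p) * (1 / (c * sp)) := by
        field_simp
      have hq2 : (4 : ℝ) / (c * sp) = 4 * (1 / (c * sp)) := by ring
      rw [hq1, hq2]
      nlinarith
    linarith

/-- The series ∑_p p^{−2ε}·(∑_{n ≠ p} 1/|λ_n − λ_p|)² converges for every ε > 0. -/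
theorem stmt6 (g h : ℝ) (hg : 0 < g) (hh : 0 < h)
    (lam : ℕ → ℂ)
    (hlam : ∀ n : ℕ, lam n =
      -Complex.I * Real.sqrt ((n : ℝ) * (g + (n : ℝ) ^ 2) * Real.tanh (h * n)))
    (ε : ℝ) (hε : 0 < ε) :
    Summable (fun p : ℕ => if p = 0 then 0 else
      (p : ℝ) ^ (-(2 * ε)) *
        (∑' n : ℕ, if n = 0 ∨ n = p then 0 else 1 / ‖lam n - lam p‖) ^ 2) := by
  set F : ℕ → ℝ := fun m =>
    Real.sqrt ((m : ℝ) * (g + (m : ℝ) ^ 2) * Real.tanh (h * m)) with hF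
  set c : ℝ := Real.tanh h / (2 * Real.sqrt (g + 1)) with hcdef
  have hg1 : (0 : ℝ) < Real.sqrt (g + 1) := Real.sqrt_pos.2 (by linarith)
  have hc : 0 < c := div_pos (my_tanh_pos hh) (by positivity)
  have hgap' : ∀ a b : ℕ, 1 ≤ a → a < b →
      c * ((b : ℝ) - a) * Real.sqrt b ≤ F b - F a := by
    intro a b ha hab
    exact my_gap g h hg hh ha hab
  have habs : ∀ n q : ℕ, ‖lam n - lam q‖ = |F n - F q| := by
    intro n q
    have h1 : lam n - lam q = -Complex.I * (((F n : ℝ) : ℂ) - ((F q : ℝ) : ℂ)) := by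
      rw [hlam n, hlam q]; ring
    have h2 : (((F n : ℝ) : ℂ) - ((F q : ℝ) : ℂ)) = ((F n - F q : ℝ) : ℂ) := by push_cast; ring
    rw [h1, h2, norm_mul, Complex.norm_real]
    simp
  set M : ℝ := (6 / c) ^ 2 * (1 + 2 / ε) ^ 2 with hM
  have hM0 : 0 ≤ M := by positivity
  apply Summable.of_nonneg_of_le (f := fun p : ℕ => M * ((p : ℝ) ^ (1 + ε))⁻¹)
  · intro p
    split_ifs with hp
    · exact le_refl 0
    · positivity
  · intro p
    rcases Nat.eq_zero_or_pos p with hp0 | hp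
    · subst hp0
      rw [if_pos rfl]
      simp [Real.zero_rpow (by linarith : (1 : ℝ) + ε ≠ 0)]
    · rw [if_neg (by omega)]
      have hp1 : (1 : ℝ) ≤ (p : ℝ) := by exact_mod_cast hp
      have hppos : (0 : ℝ) < (p : ℝ) := by linarith
      obtain ⟨hfs, hfle⟩ := my_inner c hc p hp F hgap'
        (fun n => if n = 0 ∨ n = p then 0 else 1 / ‖lam n - lam p‖)
        (fun n => by by_cases hcase : n = 0 ∨ n = p
                     · simp only [if_pos hcase]
                     · simp only [if_neg hcase, habs n p])
      set S : ℝ := ∑' n : ℕ, if n = 0 ∨ n = p then 0 else 1 / ‖lam n - lam p‖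
        with hS
      set L : ℝ := Real.log p with hL
      have hL0 : 0 ≤ L := Real.log_nonneg hp1
      have hsp : 0 < Real.sqrt p := Real.sqrt_pos.2 hppos
      have hS0 : 0 ≤ S := by
        apply tsum_nonneg
        intro n
        split_ifs with hn
        · exact le_refl 0
        · positivity
      have hB0 : 0 ≤ 6 / c * (1 + L) / Real.sqrt p := by positivity
      have hsq : S ^ 2 ≤ (6 / c * (1 + L) / Real.sqrt p) ^ 2 :=
        pow_le_pow_left₀ hS0 hfle 2
      have hBsq : (6 / c * (1 + L) / Real.sqrt p) ^ 2 = (6 / c) ^ 2 * (1 + L) ^ 2 / p := by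
        have hs : Real.sqrt p * Real.sqrt p = (p : ℝ) := Real.mul_self_sqrt hppos.le
        have hq : (6 / c * (1 + L) / Real.sqrt p) ^ 2 =
            (6 / c) ^ 2 * (1 + L) ^ 2 / (Real.sqrt p * Real.sqrt p) := by ring
        rw [hq, hs]
      have hlog : 1 + L ≤ (1 + 2 / ε) * (p : ℝ) ^ (ε / 2) := by
        have h1 : L ≤ (p : ℝ) ^ (ε / 2) / (ε / 2) :=
          Real.log_le_rpow_div (Nat.cast_nonneg p) (half_pos hε)
        have h2 : (p : ℝ) ^ (ε / 2) / (ε / 2) = (2 / ε) * (p : ℝ) ^ (ε / 2) := by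
          field_simp
        have h3 : (1 : ℝ) ≤ (p : ℝ) ^ (ε / 2) :=
          Real.one_le_rpow hp1 (by positivity)
        nlinarith
      have hlogsq : (1 + L) ^ 2 ≤ (1 + 2 / ε) ^ 2 * (p : ℝ) ^ ε := by
        have h1 : (1 + L) ^ 2 ≤ ((1 + 2 / ε) * (p : ℝ) ^ (ε / 2)) ^ 2 :=
          pow_le_pow_left₀ (by linarith) hlog 2
        have h2 : ((p : ℝ) ^ (ε / 2)) ^ 2 = (p : ℝ) ^ ε := by
          rw [← Real.rpow_natCast ((p : ℝ) ^ (ε / 2)) 2, ← Real.rpow_mul (Nat.cast_nonneg p)]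
          norm_num
        calc (1 + L) ^ 2 ≤ ((1 + 2 / ε) * (p : ℝ) ^ (ε / 2)) ^ 2 := h1
          _ = (1 + 2 / ε) ^ 2 * ((p : ℝ) ^ (ε / 2)) ^ 2 := by ring
          _ = (1 + 2 / ε) ^ 2 * (p : ℝ) ^ ε := by rw [h2]
      have hrpow : (p : ℝ) ^ (-(2 * ε)) * ((p : ℝ) ^ ε / p) = ((p : ℝ) ^ (1 + ε))⁻¹ := by
        rw [div_eq_mul_inv, ← Real.rpow_neg_one (p : ℝ), ← Real.rpow_add hppos,
          ← Real.rpow_add hppos, show -(2 * ε) + (ε + -1) = -(1 + ε) by ring,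
          Real.rpow_neg hppos.le]
      calc (p : ℝ) ^ (-(2 * ε)) * S ^ 2
          ≤ (p : ℝ) ^ (-(2 * ε)) * ((6 / c * (1 + L) / Real.sqrt p) ^ 2) :=
            mul_le_mul_of_nonneg_left hsq (Real.rpow_nonneg (Nat.cast_nonneg p) _)
        _ = (p : ℝ) ^ (-(2 * ε)) * ((6 / c) ^ 2 * (1 + L) ^ 2 / p) := by rw [hBsq]
        _ ≤ (p : ℝ) ^ (-(2 * ε)) * ((6 / c) ^ 2 * ((1 + 2 / ε) ^ 2 * (p : ℝ) ^ ε) / p) := by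
            gcongr
        _ = M * ((p : ℝ) ^ (-(2 * ε)) * ((p : ℝ) ^ ε / p)) := by rw [hM]; ring
        _ = M * ((p : ℝ) ^ (1 + ε))⁻¹ := by rw [hrpow]
  · exact (Real.summable_nat_rpow_inv.2 (by linarith)).mul_left M
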